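/- Let v : ℝ → ℝ be a C² function which is L-periodic for some L > 0 and satisfies v''(s) ≥ −1 for all s ∈ ℝ. Then |v'(s)| ≤ L for all s ∈ ℝ. -/

import Mathlib

open MeasureTheory

noncomputable section

/-- Points of `ℝ³`, written as `ℝ × ℝ × ℝ`. -/
abbrev R3 := ℝ × ℝ × ℝ

/-- The coordinate direction `x`. -/
def vx : R3 := (1, 0, 0)
/-- The coordinate direction `y`. -/
def vy : R3 := (0, 1, 0)
/-- The coordinate direction `t`. -/
def vt : R3 := (0, 0, 1)

/-- Partial (directional) derivative in the direction `e`. -/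
def pd (e : R3) (u : R3 → ℝ) : R3 → ℝ := fun p => fderiv ℝ u p e

/-- `1`-periodicity in each of the three variables. -/
def Periodic3 (u : R3 → ℝ) : Prop :=
  ∀ p : R3, u (p + vx) = u p ∧ u (p + vy) = u p ∧ u (p + vt) = u p

/-- The unit cube `[0,1]³`. -/
def cube : Set R3 := Set.Icc (0, 0, 0) (1, 1, 1)

/-- Zero mean over the unit cube. -/
def ZeroMean (u : R3 → ℝ) : Prop := ∫ p in cube, u p = 0

/-- The reduced Calabi–Yau equation
`(u_xx + 1)(u_yy + u_tt + u_t + 1) − u_xy² − u_xt² = e^F` on `ℝ³`. -/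
def CYeq (F u : R3 → ℝ) : Prop :=
  ∀ p : R3,
    (pd vx (pd vx u) p + 1)
        * (pd vy (pd vy u) p + pd vt (pd vt u) p + pd vt u p + 1)
      - (pd vy (pd vx u) p) ^ 2 - (pd vt (pd vx u) p) ^ 2 = Real.exp (F p)

/-- The Euclidean norm on `ℝ³ = ℝ × ℝ × ℝ`. -/
def enorm3 (h : R3) : ℝ := Real.sqrt (h.1 ^ 2 + h.2.1 ^ 2 + h.2.2 ^ 2)

/-- A `C²` `L`-periodic function `v : ℝ → ℝ` with `v'' ≥ −1`
satisfies `|v'| ≤ L`. -/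
theorem stmt4 (v : ℝ → ℝ) (L : ℝ) (hL : 0 < L) (hv : ContDiff ℝ 2 v)
    (hper : ∀ s : ℝ, v (s + L) = v s)
    (hconv : ∀ s : ℝ, -1 ≤ deriv (deriv v) s) :
    ∀ s : ℝ, |deriv v s| ≤ L := by
  intro s
  have hdv : Differentiable ℝ v := hv.differentiable (by norm_num)
  have hcd1 : ContDiff ℝ 1 (deriv v) :=
    (contDiff_succ_iff_deriv.mp (by exact_mod_cast hv : ContDiff ℝ (1+1) v)).2.2
  have hdv' : Differentiable ℝ (deriv v) := hcd1.differentiable (by norm_num)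
  -- g = v' + id is monotone since g' = v'' + 1 ≥ 0
  have hg : Differentiable ℝ (fun t => deriv v t + t) := hdv'.add differentiable_id
  have hmono : Monotone (fun t => deriv v t + t) := by
    apply monotone_of_deriv_nonneg hg
    intro t
    have : deriv (fun t => deriv v t + t) t = deriv (deriv v) t + 1 :=
      ((hdv' t).hasDerivAt.add (hasDerivAt_id t)).deriv
    rw [this]
    linarith [hconv t]
  -- periodicity of deriv v
  have hperd : ∀ t : ℝ, deriv v (t + L) = deriv v t := by
    intro t
    have h1 : deriv (fun x => v (x + L)) t = deriv v (t + L) :=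
      deriv_comp_add_const v L t
    have h2 : (fun x => v (x + L)) = v := funext hper
    rw [h2] at h1
    exact h1.symm
  -- a zero of deriv v in (s, s+L)
  obtain ⟨ξ, hξ, hξ0⟩ := exists_deriv_eq_slope v (by linarith : s < s + L)
    hdv.continuous.continuousOn (hdv.differentiableOn)
  have hslope : deriv v ξ = 0 := by
    rw [hper s] at hξ0
    simpa using hξ0
  obtain ⟨hξ1, hξ2⟩ := hξ
  rw [abs_le]
  constructor
  · -- lower bound: g (ξ - L) ≤ g s
    have h0 : deriv v (ξ - L) = 0 := by
      have := hperd (ξ - L)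
      simpa [sub_add_cancel, hslope] using this.symm
    have := hmono (by linarith : ξ - L ≤ s)
    simp only [h0] at this
    linarith
  · -- upper bound: g s ≤ g ξ
    have := hmono (le_of_lt hξ1)
    simp only [hslope] at this
    linarith

end
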